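/- The permutation 4321 is not contained in the increasing staircase St(Inc, Av(321)); equivalently, every permutation in St(Inc, Av(321)) avoids 4321. -/
import Mathlib


/-- `τ` contains the pattern `σ`. -/
def Contains {n k : ℕ} (τ : Fin n → Fin n) (σ : Fin k → Fin k) : Prop :=
  ∃ f : Fin k → Fin n, StrictMono f ∧ ∀ a b : Fin k, σ a < σ b ↔ τ (f a) < τ (f b)

/-- Membership of `π` in the increasing staircase `St(Inc, Av(σ))`: for some `k`,
`π` has a gridding by a `k × (k+1)` matrix whose diagonal cells `(i,i)` are
increasing and whose cells `(i,i+1)` avoid `σ`, all other cells being empty. -/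
def InStaircase {q n : ℕ} (σ : Fin q → Fin q) (π : Fin n → Fin n) : Prop :=
  ∃ k : ℕ, 0 < k ∧ ∃ c r : ℕ → ℕ, Monotone c ∧ Monotone r ∧
    c 0 = 0 ∧ c k = n ∧ r 0 = 0 ∧ r (k + 1) = n ∧
    (∀ x : Fin n, ∃ i < k, (c i ≤ (x : ℕ) ∧ (x : ℕ) < c (i + 1)) ∧
      ((r i ≤ (π x : ℕ) ∧ (π x : ℕ) < r (i + 1)) ∨
       (r (i + 1) ≤ (π x : ℕ) ∧ (π x : ℕ) < r (i + 2)))) ∧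
    (∀ i < k, ∀ x y : Fin n, x < y →
      (c i ≤ (x : ℕ) ∧ (x : ℕ) < c (i + 1) ∧ r i ≤ (π x : ℕ) ∧ (π x : ℕ) < r (i + 1)) →
      (c i ≤ (y : ℕ) ∧ (y : ℕ) < c (i + 1) ∧ r i ≤ (π y : ℕ) ∧ (π y : ℕ) < r (i + 1)) →
      π x < π y) ∧
    (∀ i < k, ¬ ∃ f : Fin q → Fin n, StrictMono f ∧
      (∀ a, c i ≤ (f a : ℕ) ∧ (f a : ℕ) < c (i + 1) ∧
        r (i + 1) ≤ (π (f a) : ℕ) ∧ (π (f a) : ℕ) < r (i + 2)) ∧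
      (∀ a b, σ a < σ b ↔ π (f a) < π (f b)))

/-- Every permutation in `St(Inc, Av(321))` avoids `4321`. -/
theorem staircase_avoids_4321 {n : ℕ} (π : Fin n → Fin n)
    (hπ : Function.Bijective π)
    (hgrid : InStaircase (![2, 1, 0] : Fin 3 → Fin 3) π) :
    ¬ Contains π (![3, 2, 1, 0] : Fin 4 → Fin 4) := by
  rintro ⟨f, hf, hpat⟩
  obtain ⟨k, hk, c, r, hc, hr, hc0, hck, hr0, hrk, hcell, hdiag, havoid⟩ := hgrid
  classical
  choose I hI using hcell
  set L : Fin n → ℕ := fun x =>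
    if (r (I x) ≤ (π x : ℕ) ∧ (π x : ℕ) < r (I x + 1)) then I x else I x + 1 with hLdef
  have hIk : ∀ x, I x < k := fun x => (hI x).1
  have hcol : ∀ x : Fin n, c (I x) ≤ (x : ℕ) ∧ (x : ℕ) < c (I x + 1) := fun x => (hI x).2.1
  have hL : ∀ x : Fin n, r (L x) ≤ (π x : ℕ) ∧ (π x : ℕ) < r (L x + 1) := by
    intro x
    simp only [hLdef]
    split_ifs with h
    · exact h
    · rcases (hI x).2.2 with h1 | h2
      · exact absurd h1 h
      · exact h2
  have hIL : ∀ x, I x ≤ L x ∧ L x ≤ I x + 1 := by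
    intro x; simp only [hLdef]; split_ifs <;> omega
  have colmono : ∀ x y : Fin n, x ≤ y → I x ≤ I y := by
    intro x y hxy
    by_contra h
    have h1 : I y + 1 ≤ I x := by omega
    have h2 := hc h1
    have h3 := (hcol x).1
    have h4 := (hcol y).2
    have h5 : (x : ℕ) ≤ (y : ℕ) := hxy
    omega
  have levmono : ∀ x y : Fin n, (π x : ℕ) ≤ (π y : ℕ) → L x ≤ L y := by
    intro x y hxy
    by_contra h
    have h1 : L y + 1 ≤ L x := by omega
    have h2 := hr h1
    have h3 := (hL x).1
    have h4 := (hL y).2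
    omega
  have hσ4 : ∀ a b : Fin 4, a < b →
      (![3, 2, 1, 0] : Fin 4 → Fin 4) b < (![3, 2, 1, 0] : Fin 4 → Fin 4) a := by decide
  have hdec : ∀ a b : Fin 4, a < b → π (f b) < π (f a) :=
    fun a b hab => (hpat b a).mp (hσ4 a b hab)
  have hdecle : ∀ a b : Fin 4, a ≤ b → (π (f b) : ℕ) ≤ (π (f a) : ℕ) := by
    intro a b h
    rcases eq_or_lt_of_le h with rfl | h
    · exact le_refl _
    · exact le_of_lt (hdec a b h)
  set i0 := I (f 0) with hi0
  have hb : ∀ t : Fin 4, i0 ≤ I (f t) ∧ I (f t) ≤ I (f 3) ∧ I (f 3) ≤ L (f 3) ∧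
      L (f 3) ≤ L (f t) ∧ L (f t) ≤ i0 + 1 := by
    intro t
    have h0t : (0 : Fin 4) ≤ t := Fin.zero_le t
    have ht3 : t ≤ (3 : Fin 4) := by
      have := t.isLt
      exact Fin.le_def.mpr (by simp; omega)
    refine ⟨colmono _ _ (hf.monotone h0t), colmono _ _ (hf.monotone ht3),
      (hIL (f 3)).1, levmono _ _ (hdecle t 3 ht3), ?_⟩
    have h1 := levmono (f t) (f 0) (hdecle 0 t h0t)
    have h2 := (hIL (f 0)).2
    omega
  have key : ∀ t : Fin 4, t < 3 → I (f t) = i0 ∧ L (f t) = i0 + 1 := by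
    intro t ht
    have hbt := hb t
    have hILt := hIL (f t)
    have hIL3 := hIL (f 3)
    have hxy : f t < f 3 := hf ht
    have hL1 : L (f t) = i0 + 1 := by
      by_contra h
      have hLt : L (f t) = i0 := by omega
      have h1 : I (f t) = i0 ∧ I (f 3) = i0 ∧ L (f 3) = i0 := by omega
      have hAc := hcol (f t); rw [h1.1] at hAc
      have hAr := hL (f t); rw [hLt] at hAr
      have hBc := hcol (f 3); rw [h1.2.1] at hBc
      have hBr := hL (f 3); rw [h1.2.2] at hBr
      have := hdiag i0 (hIk (f 0)) (f t) (f 3) hxy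
        ⟨hAc.1, hAc.2, hAr.1, hAr.2⟩ ⟨hBc.1, hBc.2, hBr.1, hBr.2⟩
      exact absurd this (asymm (hdec t 3 ht))
    have hI1 : I (f t) = i0 := by
      by_contra h
      have hIt : I (f t) = i0 + 1 := by omega
      have h1 : I (f 3) = i0 + 1 ∧ L (f 3) = i0 + 1 := by omega
      have hk1 : i0 + 1 < k := by have := hIk (f 3); omega
      have hAc := hcol (f t); rw [hIt] at hAc
      have hAr := hL (f t); rw [hL1] at hAr
      have hBc := hcol (f 3); rw [h1.1] at hBc
      have hBr := hL (f 3); rw [h1.2] at hBr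
      have := hdiag (i0 + 1) hk1 (f t) (f 3) hxy
        ⟨hAc.1, hAc.2, hAr.1, hAr.2⟩ ⟨hBc.1, hBc.2, hBr.1, hBr.2⟩
      exact absurd this (asymm (hdec t 3 ht))
    exact ⟨hI1, hL1⟩
  have h3lt : ∀ a : Fin 3, (a.castSucc : Fin 4) < 3 := by decide
  have hcs : StrictMono (fun a : Fin 3 => f a.castSucc) :=
    hf.comp fun a b hab => Fin.castSucc_lt_castSucc_iff.mpr hab
  have hσ3 : ∀ a b : Fin 3, b < a →
      (![2, 1, 0] : Fin 3 → Fin 3) a < (![2, 1, 0] : Fin 3 → Fin 3) b := by decide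
  have hσ3' : ∀ a b : Fin 3,
      (![2, 1, 0] : Fin 3 → Fin 3) a < (![2, 1, 0] : Fin 3 → Fin 3) b → b < a := by decide
  refine havoid i0 (hIk (f 0)) ⟨fun a => f a.castSucc, hcs, ?_, ?_⟩
  · intro a
    obtain ⟨hIa, hLa⟩ := key a.castSucc (h3lt a)
    have h2 := hcol (f a.castSucc); rw [hIa] at h2
    have h3 := hL (f a.castSucc); rw [hLa] at h3
    exact ⟨h2.1, h2.2, h3.1, h3.2⟩
  · intro a b
    constructor
    · intro h
      have hba : b < a := hσ3' a b h
      exact hdec _ _ (Fin.castSucc_lt_castSucc_iff.mpr hba)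
    · intro h
      rcases lt_trichotomy a b with h1 | h1 | h1
      · exact absurd (hdec _ _ (Fin.castSucc_lt_castSucc_iff.mpr h1)) (asymm h)
      · subst h1; exact absurd h (lt_irrefl _)
      · exact hσ3 a b h1
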